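/- Let κ be a regular infinite cardinal and let λ be a cardinal with λ^{<κ} = λ. Then for every function f from the unordered pairs of ordinals below λ⁺ to λ, there is a strictly increasing sequence of ordinals ⟨α_i : i ≤ κ⟩ below λ⁺ such that, setting δ = α_κ, f({α_i, α_j}) = f({α_i, δ}) for all i < j < κ. -/

import Mathlib

open Cardinal

universe u

/-- Universal tree sequence: `BB f lam s i` is the least ordinal `β < (λ⁺).ord`
above all earlier members of the branch `s` with colors prescribed by `s`. -/
noncomputable def BB (f : Ordinal.{u} → Ordinal.{u} → Ordinal.{u}) (lam : Cardinal.{u})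
    (s : Ordinal.{u} → Ordinal.{u}) (i : Ordinal.{u}) : Ordinal.{u} :=
  sInf {β | β < (Order.succ lam).ord ∧
    ∀ j, ∀ _ : j < i, BB f lam s j < β ∧ f (BB f lam s j) β = s j}
termination_by i
decreasing_by assumption

theorem BB_congr (f : Ordinal.{u} → Ordinal.{u} → Ordinal.{u}) (lam : Cardinal.{u})
    (s t : Ordinal.{u} → Ordinal.{u}) (i : Ordinal.{u}) (h : ∀ j < i, s j = t j) :
    BB f lam s i = BB f lam t i := by
  induction i using WellFoundedLT.induction with
  | _ i IH =>
    rw [BB, BB]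
    congr 1
    ext β
    constructor <;> rintro ⟨hβ, hj⟩ <;> refine ⟨hβ, fun j hji => ?_⟩
    · have e : BB f lam t j = BB f lam s j :=
        (IH j hji (fun k hk => h k (hk.trans hji))).symm
      rw [e, ← h j hji]; exact hj j hji
    · have e : BB f lam s j = BB f lam t j :=
        IH j hji (fun k hk => h k (hk.trans hji))
      rw [e, h j hji]; exact hj j hji

theorem BB_lt (f : Ordinal.{u} → Ordinal.{u} → Ordinal.{u}) (lam : Cardinal.{u})
    (hlam : ℵ₀ ≤ lam) (s : Ordinal.{u} → Ordinal.{u}) (i : Ordinal.{u}) :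
    BB f lam s i < (Order.succ lam).ord := by
  have hpos : (0 : Ordinal) < (Order.succ lam).ord := by
    rw [Cardinal.lt_ord]
    simpa using (aleph0_pos.trans_le (hlam.trans (Order.le_succ lam)))
  rw [BB]
  rcases Set.eq_empty_or_nonempty {β | β < (Order.succ lam).ord ∧
      ∀ j, ∀ _ : j < i, BB f lam s j < β ∧ f (BB f lam s j) β = s j} with h | h
  · rw [h, Ordinal.sInf_empty]; exact hpos
  · exact (csInf_mem h).1

/-- The branch sequence aiming at `δ`. -/
noncomputable def AA (f : Ordinal.{u} → Ordinal.{u} → Ordinal.{u}) (lam : Cardinal.{u})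
    (δ : Ordinal.{u}) (i : Ordinal.{u}) : Ordinal.{u} :=
  sInf {β | β < (Order.succ lam).ord ∧
    ∀ j, ∀ _ : j < i, AA f lam δ j < β ∧ f (AA f lam δ j) β = f (AA f lam δ j) δ}
termination_by i
decreasing_by assumption

theorem AA_eq_BB (f : Ordinal.{u} → Ordinal.{u} → Ordinal.{u}) (lam : Cardinal.{u})
    (δ : Ordinal.{u}) (i : Ordinal.{u}) :
    AA f lam δ i = BB f lam (fun j => f (AA f lam δ j) δ) i := by
  induction i using WellFoundedLT.induction with
  | _ i IH =>
    rw [AA, BB]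
    congr 1
    ext β
    constructor <;> rintro ⟨hβ, hj⟩ <;> refine ⟨hβ, fun j hji => ?_⟩
    · rw [← IH j hji]; exact hj j hji
    · have e := IH j hji
      obtain ⟨h1, h2⟩ := hj j hji
      rw [e] at h2 ⊢
      exact ⟨h1, h2⟩

/-- Decoding a small code into a branch. -/
noncomputable def BBdec (lam : Cardinal.{u}) (o : Ordinal.{u})
    (g : o.ToType → lam.ord.ToType) : Ordinal.{u} → Ordinal.{u} := fun j =>
  if h : j < o then
    ((Ordinal.ToType.mk (o := lam.ord)).symm (g ((Ordinal.ToType.mk (o := o)) ⟨j, h⟩)) : Set.Iio lam.ord)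
  else 0

/-- If `κ` is a regular infinite cardinal and `λ` an infinite cardinal with `λ^{<κ} = λ`,
then for every (symmetric) function `f` on pairs of ordinals below `λ⁺` with values
below `λ`, there is a strictly increasing sequence `⟨α_i : i ≤ κ⟩` of ordinals below `λ⁺`
such that, setting `δ = α_κ`, `f {α_i, α_j} = f {α_i, δ}` for all `i < j < κ`. -/
theorem erdosRado_endHomogeneous (κ lam : Cardinal.{u}) (hκ : κ.IsRegular)
    (hlam : ℵ₀ ≤ lam) (hpow : lam ^< κ = lam)
    (f : Ordinal.{u} → Ordinal.{u} → Ordinal.{u})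
    (hsymm : ∀ x y, f x y = f y x)
    (hran : ∀ x y, x < (Order.succ lam).ord → y < (Order.succ lam).ord →
      f x y < lam.ord) :
    ∃ α : Ordinal.{u} → Ordinal.{u},
      (∀ i j, i < j → j ≤ κ.ord → α i < α j) ∧
      (∀ i, i ≤ κ.ord → α i < (Order.succ lam).ord) ∧
      ∀ i j, i < j → j < κ.ord → f (α i) (α j) = f (α i) (α κ.ord) := by
  have h2 : (2 : Cardinal) ≤ lam := le_trans (by exact_mod_cast (nat_lt_aleph0 2).le) hlam
  have hkl : κ ≤ lam := by
    by_contra hlt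
    push_neg at hlt
    have h1 : lam ^ lam ≤ lam ^< κ := le_powerlt lam hlt
    rw [hpow] at h1
    exact absurd ((cantor lam).trans_le ((power_le_power_right h2).trans h1)) (lt_irrefl _)
  have hreg : (Order.succ lam).IsRegular := isRegular_succ hlam
  -- index type and its cardinality
  let ι : Type u := Σ x : κ.ord.ToType,
    ((((Ordinal.ToType.mk (o := κ.ord)).symm x : Set.Iio κ.ord) : Ordinal.{u}).ToType → lam.ord.ToType)
  have hι : #ι ≤ lam := by
    have hmk : #ι = sum fun x : κ.ord.ToType =>
        #((((Ordinal.ToType.mk (o := κ.ord)).symm x : Set.Iio κ.ord) : Ordinal.{u}).ToType → lam.ord.ToType) :=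
      mk_sigma _
    rw [hmk]
    have hb : ∀ x : κ.ord.ToType,
        #((((Ordinal.ToType.mk (o := κ.ord)).symm x : Set.Iio κ.ord) : Ordinal.{u}).ToType → lam.ord.ToType) ≤ lam := by
      intro x
      set o : Ordinal.{u} := (((Ordinal.ToType.mk (o := κ.ord)).symm x : Set.Iio κ.ord) : Ordinal.{u}) with ho
      have hoκ : o < κ.ord := ((Ordinal.ToType.mk (o := κ.ord)).symm x).2
      have hmk2 : #(o.ToType → lam.ord.ToType) = lam ^ o.card := by
        rw [← power_def, Cardinal.mk_toType, Cardinal.mk_toType, card_ord]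
      rw [hmk2]
      calc lam ^ o.card ≤ lam ^< κ := le_powerlt lam (lt_ord.mp hoκ)
        _ = lam := hpow
    calc (sum fun x : κ.ord.ToType => _) ≤ sum fun _ : κ.ord.ToType => lam := sum_le_sum _ _ hb
      _ = #κ.ord.ToType * lam := sum_const' _ _
      _ = κ * lam := by rw [Cardinal.mk_toType, card_ord]
      _ ≤ lam * lam := mul_le_mul_left hkl _
      _ = lam := mul_eq_self hlam
  -- the family of all possible branch values
  let F : ι → Ordinal.{u} := fun p =>
    BB f lam (BBdec lam (((Ordinal.ToType.mk (o := κ.ord)).symm p.1 : Set.Iio κ.ord) : Ordinal.{u}) p.2)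
      (((Ordinal.ToType.mk (o := κ.ord)).symm p.1 : Set.Iio κ.ord) : Ordinal.{u})
  have hF : iSup F < (Order.succ lam).ord :=
    iSup_lt_ord_of_isRegular hreg (hι.trans_lt (Order.lt_succ lam)) (fun p => BB_lt f lam hlam _ _)
  set δ : Ordinal.{u} := iSup F + 1 with hδ
  have hδΛ : δ < (Order.succ lam).ord := by
    have hlim : Order.IsSuccLimit ((Order.succ lam).ord) :=
      Cardinal.isSuccLimit_ord (hlam.trans (Order.le_succ lam))
    rw [hδ, Ordinal.add_one_eq_succ]
    exact hlim.succ_lt hF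
  -- key: every coded branch value is below δ
  have key : ∀ i < κ.ord, ∀ s : Ordinal.{u} → Ordinal.{u},
      (∀ j < i, s j < lam.ord) → BB f lam s i < δ := by
    intro i hi s hs
    set x : κ.ord.ToType := (Ordinal.ToType.mk (o := κ.ord)) ⟨i, hi⟩ with hx
    set o : Ordinal.{u} := (((Ordinal.ToType.mk (o := κ.ord)).symm x : Set.Iio κ.ord) : Ordinal.{u}) with ho
    have hoi : o = i := by
      rw [ho, hx, OrderIso.symm_apply_apply]
    -- encode s below o into g
    have hg : ∀ y : o.ToType,
        s (((Ordinal.ToType.mk (o := o)).symm y : Set.Iio o) : Ordinal.{u}) < lam.ord := by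
      intro y
      have := ((Ordinal.ToType.mk (o := o)).symm y).2
      exact hs _ (by rw [← hoi]; exact this)
    let g : o.ToType → lam.ord.ToType := fun y =>
      (Ordinal.ToType.mk (o := lam.ord)) ⟨s (((Ordinal.ToType.mk (o := o)).symm y : Set.Iio o) : Ordinal.{u}), hg y⟩
    have hagree : ∀ j < o, s j = BBdec lam o g j := by
      intro j hj
      simp only [BBdec, dif_pos hj, g, OrderIso.symm_apply_apply]
    have h1 : BB f lam s o = BB f lam (BBdec lam o g) o := BB_congr f lam _ _ o hagree
    have h2 : BB f lam (BBdec lam o g) o ≤ iSup F := Ordinal.le_iSup F ⟨x, g⟩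
    have h3 : BB f lam s i ≤ iSup F := by rw [← hoi, h1]; exact h2
    exact h3.trans_lt (by rw [hδ]; exact lt_add_one _)
  -- main induction: the branch at δ behaves
  have main : ∀ i, i < κ.ord →
      AA f lam δ i < δ ∧ AA f lam δ i ∈ {β | β < (Order.succ lam).ord ∧
        ∀ j, ∀ _ : j < i, AA f lam δ j < β ∧ f (AA f lam δ j) β = f (AA f lam δ j) δ} := by
    intro i
    induction i using WellFoundedLT.induction with
    | _ i IH =>
      intro hi
      have hδmem : δ ∈ {β | β < (Order.succ lam).ord ∧
          ∀ j, ∀ _ : j < i, AA f lam δ j < β ∧ f (AA f lam δ j) β = f (AA f lam δ j) δ} :=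
        ⟨hδΛ, fun j hj => ⟨(IH j hj (hj.trans hi)).1, rfl⟩⟩
      have hmem : AA f lam δ i ∈ {β | β < (Order.succ lam).ord ∧
          ∀ j, ∀ _ : j < i, AA f lam δ j < β ∧ f (AA f lam δ j) β = f (AA f lam δ j) δ} := by
        rw [AA]
        exact csInf_mem ⟨δ, hδmem⟩
      refine ⟨?_, hmem⟩
      rw [AA_eq_BB]
      refine key i hi _ (fun j hj => ?_)
      exact hran _ _ ((IH j hj (hj.trans hi)).2).1 hδΛ
  -- assemble the sequence
  refine ⟨fun i => if i < κ.ord then AA f lam δ i else δ, ?_, ?_, ?_⟩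
  · intro i j hij hjκ
    dsimp only
    rcases lt_or_eq_of_le hjκ with hj | hj
    · rw [if_pos (hij.trans hj), if_pos hj]
      exact ((main j hj).2.2 i hij).1
    · rw [if_pos (hij.trans_le hjκ), hj, if_neg (lt_irrefl _)]
      exact (main i (hij.trans_le hjκ)).1
  · intro i hiκ
    dsimp only
    by_cases h : i < κ.ord
    · rw [if_pos h]; exact (main i h).2.1
    · rw [if_neg h]; exact hδΛ
  · intro i j hij hjκ
    dsimp only
    rw [if_pos (hij.trans hjκ), if_pos hjκ, if_neg (lt_irrefl _)]
    exact ((main j hjκ).2.2 i hij).2
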